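/- Let R be a commutative ring satisfying: for every r ∈ R, every R-module map seemingly divisible by r is divisible by r. Then the same property holds for every quotient ring R/I. -/

import Mathlib

universe u

/-- If every `R`-module map seemingly divisible by an element is divisible by it,
then the same holds for every quotient ring `R ⧸ I`. -/
theorem stmt4 {R : Type u} [CommRing R]
    (hR : ∀ (r : R) (M N : Type u) [AddCommGroup M] [Module R M] [AddCommGroup N]
        [Module R N] (f : M →ₗ[R] N),
        (∀ m : M, r • m = 0 → f m = 0) → (∀ m : M, ∃ n : N, f m = r • n) →
        ∃ g : M →ₗ[R] N, f = r • g)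
    (I : Ideal R) :
    ∀ (r : R ⧸ I) (M N : Type u) [AddCommGroup M] [Module (R ⧸ I) M] [AddCommGroup N]
        [Module (R ⧸ I) N] (f : M →ₗ[R ⧸ I] N),
        (∀ m : M, r • m = 0 → f m = 0) → (∀ m : M, ∃ n : N, f m = r • n) →
        ∃ g : M →ₗ[R ⧸ I] N, f = r • g := by
  intro r M N _ _ _ _ f h1 h2
  obtain ⟨r₀, rfl⟩ := Ideal.Quotient.mk_surjective r
  letI : Module R M := Module.compHom M (Ideal.Quotient.mk I)
  letI : Module R N := Module.compHom N (Ideal.Quotient.mk I)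
  have hsM : ∀ (a : R) (m : M), a • m = (Ideal.Quotient.mk I a) • m := fun _ _ => rfl
  have hsN : ∀ (a : R) (n : N), a • n = (Ideal.Quotient.mk I a) • n := fun _ _ => rfl
  let fR : M →ₗ[R] N :=
    { toFun := f
      map_add' := f.map_add
      map_smul' := fun a m => f.map_smul (Ideal.Quotient.mk I a) m }
  obtain ⟨g, hg⟩ := hR r₀ M N fR
    (fun m hm => h1 m hm)
    (fun m => h2 m)
  refine ⟨{ toFun := g, map_add' := g.map_add, map_smul' := ?_ }, ?_⟩
  · intro s m
    obtain ⟨a, rfl⟩ := Ideal.Quotient.mk_surjective s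
    exact g.map_smul a m
  · ext m
    have := LinearMap.congr_fun hg m
    simpa [hsN, fR] using this
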